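/- Let x ~ N(μ, Θ⁻¹) with Θ positive definite and T a p×p real matrix. Then E[exp(nᵀx) · trace(T(x−μ)(x−μ)ᵀ)] = (trace(TΘ⁻¹) + nᵀΘ⁻¹TΘ⁻¹n) · exp(nᵀμ + nᵀΘ⁻¹n/2). -/

import Mathlib

open Real MeasureTheory Matrix

set_option maxHeartbeats 1000000

/-- Density of `N(μ, Θ⁻¹)` on `ℝ^p`, written in terms of the precision matrix `Θ`. -/
noncomputable def gaussDensity (p : ℕ) (Θ : Matrix (Fin p) (Fin p) ℝ) (μ : Fin p → ℝ)
    (x : Fin p → ℝ) : ℝ :=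
  (2 * Real.pi) ^ (-(p : ℝ) / 2) * Real.sqrt Θ.det *
    Real.exp (-((x - μ) ⬝ᵥ Θ.mulVec (x - μ)) / 2)


lemma intn (k : ℕ) (hk : k ≤ 2) (b : ℝ) (hb : 0 < b) :
    Integrable (fun x : ℝ => |x| ^ k * Real.exp (-b * x ^ 2)) := by
  interval_cases k
  · simpa using integrable_exp_neg_mul_sq hb
  · simpa [abs_mul, abs_of_nonneg (Real.exp_pos _).le] using
      (integrable_mul_exp_neg_mul_sq hb).abs
  · have h := integrable_rpow_mul_exp_neg_mul_sq hb (s := 2) (by norm_num)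
    have : (fun x : ℝ => |x| ^ 2 * Real.exp (-b * x ^ 2))
        = fun x : ℝ => x ^ (2:ℝ) * Real.exp (-b * x ^ 2) := by
      funext x
      rw [Real.rpow_two, sq_abs]
    rw [this]; exact h

lemma intexp (k : ℕ) (hk : k ≤ 2) (a : ℝ) :
    Integrable (fun x : ℝ => x ^ k * Real.exp (a * x - x ^ 2 / 2)) := by
  refine Integrable.mono' ((intn k hk (1/4 : ℝ) (by norm_num)).const_mul (Real.exp (a ^ 2)))
    ?_ (Filter.Eventually.of_forall fun x => ?_)
  · exact (Continuous.mul (continuous_pow k)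
      ((Real.continuous_exp).comp (by continuity))).aestronglyMeasurable
  · have h1 : a * x - x ^ 2 / 2 ≤ a ^ 2 + (-(1/4) * x ^ 2) := by nlinarith [sq_nonneg (a - x/2)]
    calc ‖x ^ k * Real.exp (a * x - x ^ 2 / 2)‖
        = |x| ^ k * Real.exp (a * x - x ^ 2 / 2) := by
          rw [norm_mul, Real.norm_eq_abs, Real.norm_eq_abs, abs_pow,
            abs_of_nonneg (Real.exp_pos _).le]
      _ ≤ |x| ^ k * Real.exp (a ^ 2 + (-(1/4) * x ^ 2)) := by
          exact mul_le_mul_of_nonneg_left (Real.exp_le_exp.2 h1) (pow_nonneg (abs_nonneg _) _)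
      _ = Real.exp (a ^ 2) * (|x| ^ k * Real.exp (-(1/4) * x ^ 2)) := by
          rw [Real.exp_add]; ring

lemma gB : Integrable (fun x : ℝ => Real.exp (-x ^ 2 / 2)) := by
  simpa [neg_div, mul_comm, mul_one_div, div_eq_mul_inv] using integrable_exp_neg_mul_sq (by norm_num : (0:ℝ) < 1/2)

lemma gB1 : Integrable (fun x : ℝ => x * Real.exp (-x ^ 2 / 2)) := by
  have h1 : Integrable (fun x : ℝ => x * Real.exp (-(1/2:ℝ) * x ^ 2)) :=
    integrable_mul_exp_neg_mul_sq (by norm_num)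
  have e : (fun x : ℝ => x * Real.exp (-x ^ 2 / 2))
      = fun x : ℝ => x * Real.exp (-(1/2:ℝ) * x ^ 2) := by funext x; ring_nf
  rw [e]; exact h1

lemma gB2 : Integrable (fun x : ℝ => x ^ 2 * Real.exp (-x ^ 2 / 2)) := by
  have := integrable_rpow_mul_exp_neg_mul_sq (by norm_num : (0:ℝ) < 1/2) (s := 2) (by norm_num)
  have e : (fun x : ℝ => x ^ 2 * Real.exp (-x ^ 2 / 2))
      = fun x : ℝ => x ^ (2:ℝ) * Real.exp (-(1/2 : ℝ) * x ^ 2) := by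
    funext x; rw [Real.rpow_two]; ring_nf
  rw [e]; exact this

lemma E0 : ∫ x : ℝ, Real.exp (-x ^ 2 / 2) = Real.sqrt (2 * π) := by
  have h := integral_gaussian (1/2 : ℝ)
  have e : (fun x : ℝ => Real.exp (-(1/2 : ℝ) * x ^ 2)) = fun x : ℝ => Real.exp (-x ^ 2 / 2) := by
    funext x; ring_nf
  rw [e] at h
  rw [h, show π / (1/2 : ℝ) = 2 * π by ring]

lemma E1 : ∫ x : ℝ, x * Real.exp (-x ^ 2 / 2) = 0 := by
  have h := integral_neg_eq_self (fun x : ℝ => x * Real.exp (-x ^ 2 / 2)) volume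
  simp only [neg_sq, neg_mul] at h
  rw [integral_neg] at h
  linarith

lemma E2 : ∫ x : ℝ, x ^ 2 * Real.exp (-x ^ 2 / 2) = Real.sqrt (2 * π) := by
  have hu : ∀ x : ℝ, HasDerivAt (fun y : ℝ => y) 1 x := fun x => hasDerivAt_id x
  have hv : ∀ x : ℝ, HasDerivAt (fun y : ℝ => -Real.exp (-y ^ 2 / 2))
      (x * Real.exp (-x ^ 2 / 2)) x := by
    intro x
    have h1 : HasDerivAt (fun y : ℝ => -y ^ 2 / 2) (-x) x := by
      have := ((hasDerivAt_pow 2 x).neg).div_const 2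
      refine this.congr_deriv ?_
      push_cast; ring
    have := (h1.exp).neg
    refine this.congr_deriv ?_
    ring
  have huv' : Integrable ((fun y : ℝ => y) * fun x => x * Real.exp (-x ^ 2 / 2)) := by
    have e : ((fun y : ℝ => y) * fun x : ℝ => x * Real.exp (-x ^ 2 / 2))
        = fun x : ℝ => x ^ 2 * Real.exp (-x ^ 2 / 2) := by
      funext x; simp only [Pi.mul_apply]; ring
    rw [e]; exact gB2
  have hu'v : Integrable ((fun _ : ℝ => (1:ℝ)) * fun y : ℝ => -Real.exp (-y ^ 2 / 2)) := by
    have e : ((fun _ : ℝ => (1:ℝ)) * fun y : ℝ => -Real.exp (-y ^ 2 / 2))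
        = fun y : ℝ => -Real.exp (-y ^ 2 / 2) := by funext y; simp only [Pi.mul_apply]; ring
    rw [e]; exact gB.neg
  have huv : Integrable ((fun y : ℝ => y) * fun y : ℝ => -Real.exp (-y ^ 2 / 2)) := by
    have e : ((fun y : ℝ => y) * fun y : ℝ => -Real.exp (-y ^ 2 / 2))
        = fun y : ℝ => -(y * Real.exp (-y ^ 2 / 2)) := by funext y; simp only [Pi.mul_apply]; ring
    rw [e]; exact gB1.neg
  have h := integral_mul_deriv_eq_deriv_mul_of_integrable (fun x _ => hu x) (fun x _ => hv x) huv' hu'v huv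
  have e1 : ∫ x : ℝ, x * (x * Real.exp (-x ^ 2 / 2)) = ∫ x : ℝ, x ^ 2 * Real.exp (-x ^ 2 / 2) := by
    congr 1; funext x; ring
  have e2 : ∫ x : ℝ, (1:ℝ) * -Real.exp (-x ^ 2 / 2) = -∫ x : ℝ, Real.exp (-x ^ 2 / 2) := by
    rw [← integral_neg]; congr 1; funext x; ring
  rw [e1, e2] at h
  rw [h, E0]; ring

lemma gshift (k : ℕ) (a : ℝ) :
    ∫ x : ℝ, x ^ k * Real.exp (a * x - x ^ 2 / 2)
      = Real.exp (a ^ 2 / 2) * ∫ x : ℝ, (x + a) ^ k * Real.exp (-x ^ 2 / 2) := by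
  rw [← integral_const_mul,
    ← integral_add_right_eq_self (fun x : ℝ => x ^ k * Real.exp (a * x - x ^ 2 / 2)) a]
  congr 1; funext x
  rw [show a * (x + a) - (x + a) ^ 2 / 2 = a ^ 2 / 2 + -x ^ 2 / 2 from by ring, Real.exp_add]
  ring

lemma L0 (a : ℝ) : ∫ x : ℝ, Real.exp (a * x - x ^ 2 / 2)
    = Real.sqrt (2 * π) * Real.exp (a ^ 2 / 2) := by
  have h := gshift 0 a
  simp only [pow_zero, one_mul] at h
  rw [h, E0]; ring

lemma L1 (a : ℝ) : ∫ x : ℝ, x * Real.exp (a * x - x ^ 2 / 2)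
    = a * (Real.sqrt (2 * π) * Real.exp (a ^ 2 / 2)) := by
  have h := gshift 1 a
  simp only [pow_one] at h
  have e : (fun x : ℝ => (x + a) * Real.exp (-x ^ 2 / 2))
      = fun x : ℝ => x * Real.exp (-x ^ 2 / 2) + a * Real.exp (-x ^ 2 / 2) := by
    funext x; ring
  rw [e] at h
  rw [h, integral_add gB1 (gB.const_mul a), E1, integral_const_mul, E0]
  ring

lemma L2 (a : ℝ) : ∫ x : ℝ, x ^ 2 * Real.exp (a * x - x ^ 2 / 2)
    = (1 + a ^ 2) * (Real.sqrt (2 * π) * Real.exp (a ^ 2 / 2)) := by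
  have h := gshift 2 a
  have e : (fun x : ℝ => (x + a) ^ 2 * Real.exp (-x ^ 2 / 2))
      = fun x : ℝ => x ^ 2 * Real.exp (-x ^ 2 / 2) +
          (2 * a * (x * Real.exp (-x ^ 2 / 2)) + a ^ 2 * Real.exp (-x ^ 2 / 2)) := by
    funext x; ring
  rw [e] at h
  have hg : Integrable (fun x : ℝ => 2 * a * (x * Real.exp (-x ^ 2 / 2))
      + a ^ 2 * Real.exp (-x ^ 2 / 2)) := (gB1.const_mul (2*a)).add (gB.const_mul (a^2))
  rw [h, integral_add gB2 hg,
    integral_add (gB1.const_mul (2*a)) (gB.const_mul (a^2)), E2,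
    integral_const_mul, integral_const_mul, E1, E0]
  ring

variable {p : ℕ}

/-- the factor functions -/
noncomputable def ff (m : Fin p → ℝ) (i j k : Fin p) : ℝ → ℝ :=
  fun w => (if k = i then w else 1) * (if k = j then w else 1) * Real.exp (m k * w - w ^ 2 / 2)

lemma ff_eq_a (m : Fin p → ℝ) (i j k : Fin p) (hi : k = i) (hj : k = j) :
    ff m i j k = fun w => w ^ 2 * Real.exp (m k * w - w ^ 2 / 2) :=
  funext fun w => by simp only [ff, if_pos hi, if_pos hj]; ring

lemma ff_eq_b (m : Fin p → ℝ) (i j k : Fin p) (hi : k = i) (hj : k ≠ j) :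
    ff m i j k = fun w => w * Real.exp (m k * w - w ^ 2 / 2) :=
  funext fun w => by simp only [ff, if_pos hi, if_neg hj]; ring

lemma ff_eq_c (m : Fin p → ℝ) (i j k : Fin p) (hi : k ≠ i) (hj : k = j) :
    ff m i j k = fun w => w * Real.exp (m k * w - w ^ 2 / 2) :=
  funext fun w => by simp only [ff, if_neg hi, if_pos hj]; ring

lemma ff_eq_d (m : Fin p → ℝ) (i j k : Fin p) (hi : k ≠ i) (hj : k ≠ j) :
    ff m i j k = fun w => Real.exp (m k * w - w ^ 2 / 2) :=
  funext fun w => by simp only [ff, if_neg hi, if_neg hj]; ring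

lemma ff_int (m : Fin p → ℝ) (i j k : Fin p) : Integrable (ff m i j k) := by
  rcases eq_or_ne k i with hi | hi <;> rcases eq_or_ne k j with hj | hj
  · rw [ff_eq_a m i j k hi hj]; exact intexp 2 (by norm_num) (m k)
  · rw [ff_eq_b m i j k hi hj]
    simpa using intexp 1 (by norm_num) (m k)
  · rw [ff_eq_c m i j k hi hj]
    simpa using intexp 1 (by norm_num) (m k)
  · rw [ff_eq_d m i j k hi hj]
    simpa using intexp 0 (by norm_num) (m k)

lemma ff_prod (m : Fin p → ℝ) (i j : Fin p) (z : Fin p → ℝ) :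
    ∏ k, ff m i j k (z k)
      = z i * z j * ∏ k, Real.exp (m k * z k - z k ^ 2 / 2) := by
  unfold ff
  rw [Finset.prod_mul_distrib, Finset.prod_mul_distrib]
  congr 1
  congr 1
  · simp [Finset.prod_ite_eq']
  · simp [Finset.prod_ite_eq']

noncomputable def I0 (a : ℝ) : ℝ := Real.sqrt (2 * π) * Real.exp (a ^ 2 / 2)

lemma ff_integral_ne (m : Fin p → ℝ) (i j k : Fin p) (hi : k ≠ i) (hj : k ≠ j) :
    ∫ w : ℝ, ff m i j k w = I0 (m k) := by
  rw [ff_eq_d m i j k hi hj]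
  exact L0 (m k)

lemma std_int (m : Fin p → ℝ) (i j : Fin p) :
    Integrable (fun z : Fin p → ℝ => z i * z j * ∏ k, Real.exp (m k * z k - z k ^ 2 / 2)) := by
  have := Integrable.fintype_prod (f := ff m i j) (fun k => ff_int m i j k)
  refine this.congr (Filter.Eventually.of_forall fun z => ?_)
  exact ff_prod m i j z

lemma std_moment (m : Fin p → ℝ) (i j : Fin p) :
    ∫ z : Fin p → ℝ, z i * z j * ∏ k, Real.exp (m k * z k - z k ^ 2 / 2)
      = ((if i = j then 1 else 0) + m i * m j) * ∏ k, I0 (m k) := by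
  have h1 : (∫ z : Fin p → ℝ, z i * z j * ∏ k, Real.exp (m k * z k - z k ^ 2 / 2))
      = ∏ k, ∫ w : ℝ, ff m i j k w := by
    rw [← MeasureTheory.integral_fintype_prod_eq_prod (f := ff m i j)]
    congr 1; funext z; exact (ff_prod m i j z).symm
  rw [h1]
  by_cases hij : i = j
  · subst hij
    simp only [if_pos rfl]
    rw [← Finset.prod_erase_mul _ _ (Finset.mem_univ i),
        ← Finset.prod_erase_mul (f := fun k => I0 (m k)) _ (Finset.mem_univ i)]
    have hrest : ∏ k ∈ Finset.univ.erase i, ∫ w : ℝ, ff m i i k w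
        = ∏ k ∈ Finset.univ.erase i, I0 (m k) := by
      refine Finset.prod_congr rfl fun k hk => ?_
      exact ff_integral_ne m i i k (Finset.ne_of_mem_erase hk) (Finset.ne_of_mem_erase hk)
    rw [hrest]
    have hi : ∫ w : ℝ, ff m i i i w = (1 + m i * m i) * I0 (m i) := by
      rw [ff_eq_a m i i i rfl rfl, L2 (m i)]
      unfold I0; ring
    rw [hi]; simp; ring
  · simp only [if_neg hij]
    have hji : j ∈ (Finset.univ.erase i (α := Fin p)) := Finset.mem_erase.2 ⟨Ne.symm hij, Finset.mem_univ j⟩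
    rw [← Finset.prod_erase_mul _ _ (Finset.mem_univ i), ← Finset.prod_erase_mul _ _ hji,
        ← Finset.prod_erase_mul (f := fun k => I0 (m k)) _ (Finset.mem_univ i),
        ← Finset.prod_erase_mul (f := fun k => I0 (m k)) _ hji]
    have hrest : ∏ k ∈ (Finset.univ.erase i).erase j, ∫ w : ℝ, ff m i j k w
        = ∏ k ∈ (Finset.univ.erase i).erase j, I0 (m k) := by
      refine Finset.prod_congr rfl fun k hk => ?_
      exact ff_integral_ne m i j k (Finset.ne_of_mem_erase (Finset.mem_of_mem_erase hk))
        (Finset.ne_of_mem_erase hk)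
    have hvi : ∫ w : ℝ, ff m i j i w = m i * I0 (m i) := by
      rw [ff_eq_b m i j i rfl hij, L1 (m i)]; unfold I0; ring
    have hvj : ∫ w : ℝ, ff m i j j w = m j * I0 (m j) := by
      rw [ff_eq_c m i j j (Ne.symm hij) rfl, L1 (m j)]; unfold I0; ring
    rw [hrest, hvi, hvj]; ring

lemma integral_comp_mulVec {p : ℕ} (A : Matrix (Fin p) (Fin p) ℝ) (hA : A.det ≠ 0)
    (h : (Fin p → ℝ) → ℝ) :
    ∫ x : Fin p → ℝ, h x = |A.det| * ∫ z : Fin p → ℝ, h (A.mulVec z) := by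
  have hinv : Invertible A := A.invertibleOfIsUnitDet (isUnit_iff_ne_zero.2 hA)
  let e : (Fin p → ℝ) ≃ₗ[ℝ] (Fin p → ℝ) := Matrix.toLinearEquiv' A hinv
  let me : (Fin p → ℝ) ≃ᵐ (Fin p → ℝ) :=
    e.toContinuousLinearEquiv.toHomeomorph.toMeasurableEquiv
  have hcoe : (⇑me) = ⇑(Matrix.toLin' A) := by funext v; rfl
  have key : Measure.map (⇑me) volume = ENNReal.ofReal |A.det|⁻¹ • volume := by
    rw [hcoe]
    rw [Real.map_matrix_volume_pi_eq_smul_volume_pi hA, abs_inv]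
  have h2 : ∫ z : Fin p → ℝ, h (A.mulVec z) = |A.det|⁻¹ * ∫ x : Fin p → ℝ, h x := by
    have h3 := MeasureTheory.integral_map_equiv (μ := volume) me h
    rw [key] at h3
    rw [integral_smul_measure] at h3
    have h4 : ∀ z, h (me z) = h (A.mulVec z) := fun z => by rw [hcoe]; simp [Matrix.toLin'_apply]
    simp only [h4] at h3
    rw [← h3, ENNReal.toReal_ofReal (by positivity)]
    simp
  rw [h2, ← mul_assoc, mul_inv_cancel₀ (by simpa using hA), one_mul]


lemma dot_quad {p : ℕ} (A M : Matrix (Fin p) (Fin p) ℝ) (hA : Aᵀ = A) (u v : Fin p → ℝ) :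
    (A *ᵥ u) ⬝ᵥ M *ᵥ (A *ᵥ v) = u ⬝ᵥ (A * M * A) *ᵥ v := by
  rw [mulVec_mulVec, dotProduct_mulVec, ← vecMul_transpose, vecMul_vecMul,
    ← dotProduct_mulVec, hA, ← Matrix.mul_assoc]

lemma trace_mul_vecMulVec {p : ℕ} (T : Matrix (Fin p) (Fin p) ℝ) (u v : Fin p → ℝ) :
    (T * vecMulVec u v).trace = v ⬝ᵥ T *ᵥ u := by
  simp only [Matrix.trace, Matrix.diag_apply, Matrix.mul_apply, Matrix.vecMulVec_apply,
    dotProduct, Matrix.mulVec, Finset.mul_sum]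
  exact Finset.sum_congr rfl fun i _ => Finset.sum_congr rfl fun j _ => by ring

lemma dot_double {p : ℕ} (M : Matrix (Fin p) (Fin p) ℝ) (z : Fin p → ℝ) :
    z ⬝ᵥ M *ᵥ z = ∑ i, ∑ j, M i j * (z i * z j) := by
  simp only [dotProduct, Matrix.mulVec, Finset.mul_sum]
  exact Finset.sum_congr rfl fun i _ => Finset.sum_congr rfl fun j _ => by ring


open scoped MatrixOrder

/-- Gaussian moment identity: for `x ~ N(μ, Θ⁻¹)`,
`E[exp(nᵀx)·tr(T(x−μ)(x−μ)ᵀ)] = (tr(TΘ⁻¹) + nᵀΘ⁻¹TΘ⁻¹n)·exp(nᵀμ + nᵀΘ⁻¹n/2)`. -/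
theorem stmt_6 (p : ℕ) (Θ : Matrix (Fin p) (Fin p) ℝ) (μ : Fin p → ℝ) (hΘ : Θ.PosDef)
    (n : Fin p → ℝ) (T : Matrix (Fin p) (Fin p) ℝ) :
    (∫ x : Fin p → ℝ, gaussDensity p Θ μ x *
        (Real.exp (n ⬝ᵥ x) *
          (T * Matrix.vecMulVec (x - μ) (x - μ)).trace)) =
      ((T * Θ⁻¹).trace + n ⬝ᵥ (Θ⁻¹ * T * Θ⁻¹).mulVec n) *
        Real.exp (n ⬝ᵥ μ + n ⬝ᵥ Θ⁻¹.mulVec n / 2) := by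
  classical
  have hdΘ : (0:ℝ) < Θ.det := hΘ.det_pos
  have hSsd : (Θ⁻¹).PosSemidef := hΘ.inv.posSemidef
  set A : Matrix (Fin p) (Fin p) ℝ := CFC.sqrt (Θ⁻¹) with hAdef
  have hAA : A * A = Θ⁻¹ := CFC.sqrt_mul_sqrt_self (Θ⁻¹) hSsd.nonneg
  have hAH : Aᵀ = A := by
    have h := (CFC.sqrt_nonneg (Θ⁻¹)).posSemidef.1
    simpa [Matrix.IsHermitian, Matrix.conjTranspose_eq_transpose_of_trivial] using h
  have hdet_inv : (Θ⁻¹).det = Θ.det⁻¹ := by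
    rw [Matrix.det_nonsing_inv, Ring.inverse_eq_inv']
  have hdd : A.det * A.det = Θ.det⁻¹ := by rw [← Matrix.det_mul, hAA, hdet_inv]
  have hdA0 : A.det ≠ 0 := by
    intro h
    rw [h, mul_zero] at hdd
    exact (inv_ne_zero hdΘ.ne') hdd.symm
  have hdAnn : 0 ≤ A.det := by
    have hsd := (CFC.sqrt_nonneg (Θ⁻¹)).posSemidef
    rw [hsd.isHermitian.det_eq_prod_eigenvalues]
    exact Finset.prod_nonneg fun i _ => hsd.eigenvalues_nonneg i
  have hΘu : IsUnit Θ.det := hdΘ.ne'.isUnit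
  have hATA : A * Θ * A = 1 := by
    have h1 : A * (A * Θ) = 1 := by
      rw [← Matrix.mul_assoc, hAA, Matrix.nonsing_inv_mul Θ hΘu]
    exact mul_eq_one_comm.mp h1
  set m : Fin p → ℝ := A *ᵥ n with hmdef
  set S' : Matrix (Fin p) (Fin p) ℝ := A * T * A with hS'def
  set P : ℝ := ∏ k, I0 (m k) with hPdef
  -- pointwise identity
  have hpt : ∀ z : Fin p → ℝ,
      gaussDensity p Θ μ (A *ᵥ z + μ) * (Real.exp (n ⬝ᵥ (A *ᵥ z + μ)) *
          (T * Matrix.vecMulVec ((A *ᵥ z + μ) - μ) ((A *ᵥ z + μ) - μ)).trace)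
        = ((2 * Real.pi) ^ (-(p : ℝ) / 2) * Real.sqrt Θ.det * Real.exp (n ⬝ᵥ μ)) *
            ∑ i, ∑ j, S' i j * (z i * z j * ∏ k, Real.exp (m k * z k - z k ^ 2 / 2)) := by
    intro z
    have hsub : (A *ᵥ z + μ) - μ = A *ᵥ z := by abel
    have e1 : ((A *ᵥ z + μ) - μ) ⬝ᵥ Θ *ᵥ ((A *ᵥ z + μ) - μ) = z ⬝ᵥ z := by
      rw [hsub, dot_quad A Θ hAH, hATA, Matrix.one_mulVec]
    have e2 : n ⬝ᵥ (A *ᵥ z + μ) = m ⬝ᵥ z + n ⬝ᵥ μ := by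
      rw [dotProduct_add]
      congr 1
      rw [dotProduct_mulVec, ← hAH, vecMul_transpose]
    have e3 : (T * Matrix.vecMulVec ((A *ᵥ z + μ) - μ) ((A *ᵥ z + μ) - μ)).trace
        = ∑ i, ∑ j, S' i j * (z i * z j) := by
      rw [hsub, trace_mul_vecMulVec, dot_quad A T hAH, dot_double]
    have e4 : Real.exp (-(z ⬝ᵥ z) / 2) * Real.exp (m ⬝ᵥ z)
        = ∏ k, Real.exp (m k * z k - z k ^ 2 / 2) := by
      rw [← Real.exp_add, ← Real.exp_sum]
      congr 1
      rw [Finset.sum_sub_distrib, dotProduct, dotProduct, ← Finset.sum_div]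
      have hzz : ∑ k, z k * z k = ∑ k, z k ^ 2 :=
        Finset.sum_congr rfl fun k _ => (pow_two (z k)).symm
      rw [hzz]
      ring
    rw [gaussDensity, e1, e2, e3, Real.exp_add]
    simp only [← e4]
    simp only [Finset.mul_sum]
    exact Finset.sum_congr rfl fun i _ => Finset.sum_congr rfl fun j _ => by ring
  -- integrability
  have hqint : ∀ i j : Fin p, Integrable (fun z : Fin p → ℝ =>
      S' i j * (z i * z j * ∏ k, Real.exp (m k * z k - z k ^ 2 / 2))) :=
    fun i j => (std_int m i j).const_mul _
  have hsint : ∀ i : Fin p, Integrable (fun z : Fin p → ℝ =>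
      ∑ j, S' i j * (z i * z j * ∏ k, Real.exp (m k * z k - z k ^ 2 / 2))) :=
    fun i => integrable_finset_sum _ (fun j _ => hqint i j)
  -- main computation
  have key : (∫ x : Fin p → ℝ, gaussDensity p Θ μ x *
        (Real.exp (n ⬝ᵥ x) * (T * Matrix.vecMulVec (x - μ) (x - μ)).trace))
      = |A.det| * (((2 * Real.pi) ^ (-(p : ℝ) / 2) * Real.sqrt Θ.det * Real.exp (n ⬝ᵥ μ)) *
          ∑ i, ∑ j, S' i j * (((if i = j then (1:ℝ) else 0) + m i * m j) * P)) := by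
    calc (∫ x : Fin p → ℝ, gaussDensity p Θ μ x *
            (Real.exp (n ⬝ᵥ x) * (T * Matrix.vecMulVec (x - μ) (x - μ)).trace))
        = ∫ y : Fin p → ℝ, gaussDensity p Θ μ (y + μ) *
            (Real.exp (n ⬝ᵥ (y + μ)) *
              (T * Matrix.vecMulVec ((y + μ) - μ) ((y + μ) - μ)).trace) :=
          (integral_add_right_eq_self (fun x : Fin p → ℝ => gaussDensity p Θ μ x *
            (Real.exp (n ⬝ᵥ x) * (T * Matrix.vecMulVec (x - μ) (x - μ)).trace)) μ).symm
      _ = |A.det| * ∫ z : Fin p → ℝ, gaussDensity p Θ μ (A *ᵥ z + μ) *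
            (Real.exp (n ⬝ᵥ (A *ᵥ z + μ)) *
              (T * Matrix.vecMulVec ((A *ᵥ z + μ) - μ) ((A *ᵥ z + μ) - μ)).trace) :=
          integral_comp_mulVec A hdA0 _
      _ = |A.det| * ∫ z : Fin p → ℝ,
            ((2 * Real.pi) ^ (-(p : ℝ) / 2) * Real.sqrt Θ.det * Real.exp (n ⬝ᵥ μ)) *
            ∑ i, ∑ j, S' i j * (z i * z j * ∏ k, Real.exp (m k * z k - z k ^ 2 / 2)) := by
          congr 1
          exact integral_congr_ae (Filter.Eventually.of_forall hpt)
      _ = |A.det| * (((2 * Real.pi) ^ (-(p : ℝ) / 2) * Real.sqrt Θ.det * Real.exp (n ⬝ᵥ μ)) *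
            ∑ i, ∑ j, S' i j * (((if i = j then (1:ℝ) else 0) + m i * m j) * P)) := by
          rw [integral_const_mul, integral_finset_sum _ (fun i _ => hsint i)]
          congr 2
          refine Finset.sum_congr rfl fun i _ => ?_
          rw [integral_finset_sum _ (fun j _ => hqint i j)]
          refine Finset.sum_congr rfl fun j _ => ?_
          rw [integral_const_mul, std_moment]
  rw [key]
  -- algebraic cleanup
  have hsum : ∑ i, ∑ j, S' i j * (((if i = j then (1:ℝ) else 0) + m i * m j) * P)
      = (S'.trace + m ⬝ᵥ S' *ᵥ m) * P := by
    have expand : ∀ i j : Fin p, S' i j * (((if i = j then (1:ℝ) else 0) + m i * m j) * P)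
        = (if i = j then S' i j else 0) * P + S' i j * (m i * m j) * P := by
      intro i j
      by_cases h : i = j <;> simp [h] <;> ring
    simp only [expand, Finset.sum_add_distrib, ← Finset.sum_mul]
    have h1 : ∀ i : Fin p, ∑ j, (if i = j then S' i j else 0) = S' i i := by
      intro i
      rw [Finset.sum_ite_eq]
      simp
    simp only [h1]
    rw [dot_double S' m, Matrix.trace]
    simp only [Matrix.diag_apply]
    ring
  have htr : S'.trace = (T * Θ⁻¹).trace := by
    rw [hS'def, Matrix.trace_mul_cycle, hAA, Matrix.trace_mul_comm]
  have hAS'A : A * S' * A = Θ⁻¹ * T * Θ⁻¹ := by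
    rw [hS'def, ← hAA]
    simp only [Matrix.mul_assoc]
  have hqq : m ⬝ᵥ S' *ᵥ m = n ⬝ᵥ (Θ⁻¹ * T * Θ⁻¹) *ᵥ n := by
    rw [hmdef, dot_quad A S' hAH, hAS'A]
  have hmm2 : m ⬝ᵥ m = n ⬝ᵥ Θ⁻¹ *ᵥ n := by
    have h := dot_quad A 1 hAH n n
    rw [Matrix.one_mulVec, Matrix.mul_one, hAA] at h
    rw [hmdef]
    exact h
  have hP : P = (2 * π) ^ ((p:ℝ)/2) * Real.exp ((m ⬝ᵥ m)/2) := by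
    rw [hPdef]
    unfold I0
    rw [Finset.prod_mul_distrib, Finset.prod_const, ← Real.exp_sum]
    congr 1
    · rw [Finset.card_univ, Fintype.card_fin, Real.sqrt_eq_rpow,
        ← Real.rpow_natCast ((2*π) ^ ((1:ℝ)/2)) p, ← Real.rpow_mul (by positivity)]
      congr 1
      ring
    · rw [dotProduct, ← Finset.sum_div]
      exact congrArg (fun t => Real.exp (t / 2)) (Finset.sum_congr rfl fun k _ => pow_two (m k))
  have hone : Real.sqrt Θ.det * A.det = 1 := by
    have hx2 : (Real.sqrt Θ.det * A.det) ^ 2 = 1 := by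
      rw [mul_pow, Real.sq_sqrt hdΘ.le, pow_two, hdd]
      field_simp
    nlinarith [mul_nonneg (Real.sqrt_nonneg Θ.det) hdAnn]
  have hrp : (2*π) ^ (-(p:ℝ)/2) * (2*π) ^ ((p:ℝ)/2) = 1 := by
    rw [← Real.rpow_add (by positivity), show -(p:ℝ)/2 + (p:ℝ)/2 = 0 by ring, Real.rpow_zero]
  rw [hsum, hP, htr, hqq, hmm2, abs_of_nonneg hdAnn, Real.exp_add]
  have final : A.det * ((2 * π) ^ (-(p:ℝ)/2) * Real.sqrt Θ.det * Real.exp (n ⬝ᵥ μ) *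
        (((T * Θ⁻¹).trace + n ⬝ᵥ (Θ⁻¹ * T * Θ⁻¹) *ᵥ n) *
          ((2 * π) ^ ((p:ℝ)/2) * Real.exp (n ⬝ᵥ Θ⁻¹ *ᵥ n / 2))))
      = (Real.sqrt Θ.det * A.det) * ((2*π) ^ (-(p:ℝ)/2) * (2*π) ^ ((p:ℝ)/2)) *
        (((T * Θ⁻¹).trace + n ⬝ᵥ (Θ⁻¹ * T * Θ⁻¹) *ᵥ n) *
          (Real.exp (n ⬝ᵥ μ) * Real.exp (n ⬝ᵥ Θ⁻¹ *ᵥ n / 2))) := by ring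
  rw [final, hone, hrp]
  ring
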